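/- For all σ ≠ 0, the inequality 6(e^σ − 1 − σ)e^{2σ} > (e^σ − 1)e^σ·(3(e^σ − 1) + 2(e^σ − 1 − σ)) holds. -/

import Mathlib

open Real Set

noncomputable def F14 (σ : ℝ) : ℝ :=
  Real.exp (2*σ) + 4 * Real.exp σ - 5 - 4*σ*Real.exp σ - 2*σ

noncomputable def F14' (σ : ℝ) : ℝ :=
  2 * Real.exp (2*σ) - 4*σ*Real.exp σ - 2

lemma hasDerivAt_F14 (σ : ℝ) : HasDerivAt F14 (F14' σ) σ := by
  have h2 : HasDerivAt (fun σ : ℝ => Real.exp (2*σ)) (2 * Real.exp (2*σ)) σ := by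
    have := (Real.hasDerivAt_exp (2*σ)).comp σ ((hasDerivAt_id σ).const_mul 2)
    simpa [Function.comp_def, mul_comm] using this
  have h3 : HasDerivAt (fun σ : ℝ => 4 * Real.exp σ) (4 * Real.exp σ) σ :=
    (Real.hasDerivAt_exp σ).const_mul 4
  have h4 : HasDerivAt (fun σ : ℝ => 4*σ*Real.exp σ)
      (4 * Real.exp σ + 4*σ*Real.exp σ) σ := by
    have := ((hasDerivAt_id σ).const_mul 4).mul (Real.hasDerivAt_exp σ)
    exact this.congr_deriv (by simp)
  have h5 : HasDerivAt (fun σ : ℝ => 2*σ) 2 σ := by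
    simpa using (hasDerivAt_id σ).const_mul 2
  have := ((((h2.add h3).sub (hasDerivAt_const σ 5)).sub h4).sub h5)
  exact this.congr_deriv (by unfold F14'; ring)

lemma hasDerivAt_F14' (σ : ℝ) :
    HasDerivAt F14' (4 * Real.exp σ * (Real.exp σ - 1 - σ)) σ := by
  have h2 : HasDerivAt (fun σ : ℝ => 2 * Real.exp (2*σ)) (4 * Real.exp (2*σ)) σ := by
    have := ((Real.hasDerivAt_exp (2*σ)).comp σ ((hasDerivAt_id σ).const_mul 2)).const_mul 2
    exact this.congr_deriv (by ring)
  have h4 : HasDerivAt (fun σ : ℝ => 4*σ*Real.exp σ)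
      (4 * Real.exp σ + 4*σ*Real.exp σ) σ := by
    have := ((hasDerivAt_id σ).const_mul 4).mul (Real.hasDerivAt_exp σ)
    exact this.congr_deriv (by simp)
  have := (h2.sub h4).sub (hasDerivAt_const σ 2)
  exact this.congr_deriv (by rw [two_mul, Real.exp_add]; ring)

lemma F14'_deriv_pos {σ : ℝ} (h : σ ≠ 0) :
    0 < 4 * Real.exp σ * (Real.exp σ - 1 - σ) := by
  have h1 : σ + 1 < Real.exp σ := Real.add_one_lt_exp h
  have h2 : 0 < Real.exp σ := Real.exp_pos σ
  nlinarith

lemma F14'_pos_of_pos {σ : ℝ} (h : 0 < σ) : 0 < F14' σ := by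
  have hmono : StrictMonoOn F14' (Ici (0:ℝ)) := by
    apply strictMonoOn_of_deriv_pos (convex_Ici 0)
      (fun x _ => (hasDerivAt_F14' x).continuousAt.continuousWithinAt)
    intro x hx
    rw [interior_Ici] at hx
    rw [(hasDerivAt_F14' x).deriv]
    exact F14'_deriv_pos (ne_of_gt hx)
  have h0 : F14' 0 = 0 := by simp [F14']
  have := hmono (self_mem_Ici : (0:ℝ) ∈ Ici (0:ℝ)) (le_of_lt h) h
  rwa [h0] at this

lemma F14'_neg_of_neg {σ : ℝ} (h : σ < 0) : F14' σ < 0 := by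
  have hmono : StrictMonoOn F14' (Iic (0:ℝ)) := by
    apply strictMonoOn_of_deriv_pos (convex_Iic 0)
      (fun x _ => (hasDerivAt_F14' x).continuousAt.continuousWithinAt)
    intro x hx
    rw [interior_Iic] at hx
    rw [(hasDerivAt_F14' x).deriv]
    exact F14'_deriv_pos (ne_of_lt hx)
  have h0 : F14' 0 = 0 := by simp [F14']
  have := hmono (le_of_lt h) (self_mem_Iic : (0:ℝ) ∈ Iic (0:ℝ)) h
  rwa [h0] at this

lemma F14_pos {σ : ℝ} (h : σ ≠ 0) : 0 < F14 σ := by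
  have h0 : F14 0 = 0 := by simp [F14]; ring
  rcases lt_or_gt_of_ne h with hneg | hpos
  · have hanti : StrictAntiOn F14 (Iic (0:ℝ)) := by
      apply strictAntiOn_of_deriv_neg (convex_Iic 0)
        (fun x _ => (hasDerivAt_F14 x).continuousAt.continuousWithinAt)
      intro x hx
      rw [interior_Iic] at hx
      rw [(hasDerivAt_F14 x).deriv]
      exact F14'_neg_of_neg hx
    have := hanti (le_of_lt hneg) (self_mem_Iic : (0:ℝ) ∈ Iic (0:ℝ)) hneg
    rwa [h0] at this
  · have hmono : StrictMonoOn F14 (Ici (0:ℝ)) := by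
      apply strictMonoOn_of_deriv_pos (convex_Ici 0)
        (fun x _ => (hasDerivAt_F14 x).continuousAt.continuousWithinAt)
      intro x hx
      rw [interior_Ici] at hx
      rw [(hasDerivAt_F14 x).deriv]
      exact F14'_pos_of_pos hx
    have := hmono (self_mem_Ici : (0:ℝ) ∈ Ici (0:ℝ)) (le_of_lt hpos) hpos
    rwa [h0] at this

/-- For all σ ≠ 0, the inequality
6(e^σ − 1 − σ)e^{2σ} > (e^σ − 1)e^σ·(3(e^σ − 1) + 2(e^σ − 1 − σ)) holds. -/
theorem stmt_14 :
    ∀ σ : ℝ, σ ≠ 0 →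
      (Real.exp σ - 1) * Real.exp σ *
          (3 * (Real.exp σ - 1) + 2 * (Real.exp σ - 1 - σ)) <
        6 * (Real.exp σ - 1 - σ) * Real.exp (2 * σ) := by
  intro σ hσ
  have hf := F14_pos hσ
  have hx : 0 < Real.exp σ := Real.exp_pos σ
  have he2 : Real.exp (2*σ) = Real.exp σ * Real.exp σ := by
    rw [two_mul, Real.exp_add]
  unfold F14 at hf
  rw [he2] at hf ⊢
  nlinarith [hf, hx, mul_pos hx hf]
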